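/- For all integers p, q ≥ 1, the composition μ_{p+q}∘sh_{p,q} is zero as a map (⊗^p V[1]) ⊗ (⊗^q V[1]) → ⊗^{p+q} V[1], where sh_{p,q} is the Koszul-signed shuffle product and μ_n is the iterated signed antisymmetrization. -/

import Mathlib

noncomputable section
namespace PG

open Finsupp

/-- Free `K`-module on the type `α`. -/
abbrev FM (K : Type) [Field K] (α : Type) : Type := α →₀ K

variable {K : Type} [Field K] {ι : Type}

/-- linear extension of a map defined on the canonical basis -/
def extL {α β : Type} (f : α → FM K β) : FM K α →ₗ[K] FM K β :=
  Finsupp.lift (FM K β) K α f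

/-- the sign `(-1)^n` -/
def zsgn (K : Type) [Field K] (n : ℤ) : K := (-1 : K) ^ n

/-- sum of degrees of the entries of a list -/
def dsum {α : Type} (dg : α → ℤ) (l : List α) : ℤ := (l.map dg).sum

/-- enumerate the positions of a list: (prefix, element, suffix) -/
def focuses {α : Type} : List α → List (List α × α × List α)
  | [] => []
  | a :: l => ([], a, l) :: (focuses l).map (fun t => (a :: t.1, t.2.1, t.2.2))

/-- sum of the values of `f` over a list -/
def fsum {α β : Type} [AddCommMonoid β] (l : List α) (f : α → β) : β := (l.map f).sum

/-- all splittings of a list into two complementary subsequences (I, J),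
together with the Koszul sign of the corresponding unshuffle -/
def splits {α : Type} (K : Type) [Field K] (dg : α → ℤ) :
    List α → List (List α × List α × K)
  | [] => [([], [], 1)]
  | a :: l =>
      ((splits K dg l).map (fun t => (a :: t.1, t.2.1, t.2.2)))
      ++ ((splits K dg l).map
          (fun t => (t.1, a :: t.2.1, zsgn K (dg a * dsum dg t.1) * t.2.2)))

/-- `x₁⋯xₙ ↦ Σ_t ± xₜ ⊗ (x₁⋯ x̂ₜ ⋯xₙ)` : canonical embedding of a symmetric word
into (generator) × (symmetric word), with Koszul signs. -/
def symEmb {α : Type} (K : Type) [Field K] (dg : α → ℤ) : List α → FM K (α × List α)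
  | [] => 0
  | a :: l => Finsupp.single (a, l) 1
      + (symEmb K dg l).sum
          (fun b c => (c * zsgn K (dg b.1 * dg a)) • Finsupp.single (b.1, a :: b.2) 1)

/-- the cofree permutative coproduct on (head) ⊗ (symmetric word):
`Δ(x₀ ⊗ x₁⋯xₙ) = Σ_{I ⊔ J, J≠∅} ε (x₀ ⊗ x_I) ⊗ x_J` (second factor expanded by `symEmb`). -/
def permDelta {α : Type} (K : Type) [Field K] (dg : α → ℤ) (b : α × List α) :
    FM K ((α × List α) × (α × List α)) :=
  fsum (splits K dg b.2) (fun t =>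
    match t.2.1 with
    | [] => 0
    | _ => t.2.2 • Finsupp.mapDomain (fun e => ((b.1, t.1), e)) (symEmb K dg t.2.1))

/-- the graded (Koszul-signed) shuffle product on words -/
def shf (K : Type) [Field K] (ds : ι → ℤ) : List ι → List ι → FM K (List ι)
  | [], v => Finsupp.single v 1
  | u, [] => Finsupp.single u 1
  | a :: u, b :: v =>
      Finsupp.mapDomain (a :: ·) (shf K ds u (b :: v))
      + zsgn K (ds b * dsum ds (a :: u)) • Finsupp.mapDomain (b :: ·) (shf K ds (a :: u) v)
  termination_by u v => u.length + v.length

/-- the iterated signed antisymmetrisation μₙ : μ₁ = id,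
μ_{n+1} = μ_n ⊗ id − (μ_n ⊗ id) ∘ τ_{n+1}⁻¹ (Koszul-signed cyclic action). -/
def mu (K : Type) [Field K] (ds : ι → ℤ) : List ι → FM K (List ι)
  | [] => 0
  | [a] => Finsupp.single [a] 1
  | a :: b :: l =>
      Finsupp.mapDomain (fun w => w ++ [(b :: l).getLast (List.cons_ne_nil _ _)])
        (mu K ds ((a :: b :: l).dropLast))
      - zsgn K (ds a * dsum ds (b :: l)) •
          Finsupp.mapDomain (fun w => w ++ [a]) (mu K ds (b :: l))
  termination_by w => w.length
  decreasing_by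
  · simp
  · simp

/-- prepend a general vector (an element of the free module on `ι`) to words -/
def consV (g : FM K ι) (m : FM K (List ι)) : FM K (List ι) :=
  g.sum fun i c => c • Finsupp.mapDomain (i :: ·) m

/-- the nontrivial deconcatenations of a word -/
def cuts {α : Type} (w : List α) : List (List α × List α) :=
  (List.range (w.length - 1)).map (fun k => (w.take (k + 1), w.drop (k + 1)))

/-- the Koszul crossing exponent of a list of positions (each position `i`
carries the degree `degs i`): sum over inversions of products of degrees. -/
def crossExp (degs : ℕ → ℤ) : List ℕ → ℤ
  | [] => 0
  | a :: l => ((l.filter (fun b => decide (b < a))).map (fun b => degs a * degs b)).sum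
      + crossExp degs l

/-- degree of the letter at position `i` of the word `w` -/
def posDeg (ds : ι → ℤ) (w : List ι) (i : ℕ) : ℤ := (w.map ds).getD i 0

/-- subword of `w` on the set of positions `S` (kept in increasing order) -/
def subw (w : List ι) (S : Finset ℕ) : List ι :=
  (((List.range w.length).zip w).filter (fun p => decide (p.1 ∈ S))).map Prod.snd

/-- the Koszul sign of the unshuffle of `w` rearranging its letters in the
order of positions given by `out` -/
def unshSgn (K : Type) [Field K] (ds : ι → ℤ) (w : List ι) (out : List ℕ) : K :=
  zsgn K (crossExp (posDeg ds w) out)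

/-- submodule spanned by a set of relations -/
def idealOf {α : Type} (S : Set (FM K α)) : Submodule K (FM K α) := Submodule.span K S

/-- the span, in the free module on `α × α`, of the relations of `S` put in either factor -/
def idealPair {α : Type} (S : Set (FM K α)) : Submodule K (FM K (α × α)) :=
  Submodule.span K
    ({x | ∃ c, ∃ p ∈ S, x = Finsupp.mapDomain (fun a => (a, c)) p} ∪
     {x | ∃ c, ∃ p ∈ S, x = Finsupp.mapDomain (fun a => (c, a)) p})

/-- the span, in the free module on `α × α × α`, of the relations of `S` put in any factor -/
def idealTriple {α : Type} (S : Set (FM K α)) : Submodule K (FM K (α × α × α)) :=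
  Submodule.span K
    ({x | ∃ c d, ∃ p ∈ S, x = Finsupp.mapDomain (fun a => (a, c, d)) p} ∪
     ({x | ∃ c d, ∃ p ∈ S, x = Finsupp.mapDomain (fun a => (c, a, d)) p} ∪
      {x | ∃ c d, ∃ p ∈ S, x = Finsupp.mapDomain (fun a => (c, d, a)) p}))

/-- graded-symmetry relations on words: `⋯ab⋯ − (−1)^{deg a · deg b} ⋯ba⋯` -/
def symRelW (K : Type) [Field K] (ds : ι → ℤ) : Set (FM K (List ι)) :=
  {x | ∃ u : List ι, ∃ a b : ι, ∃ v : List ι,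
    x = Finsupp.single (u ++ a :: b :: v) 1
      - zsgn K (ds a * ds b) • Finsupp.single (u ++ b :: a :: v) 1}

/-- shuffle relations: the images of all the shuffle products `sh_{p,q}`, `p,q ≥ 1` -/
def shRel (K : Type) [Field K] (ds : ι → ℤ) : Set (FM K (List ι)) :=
  {x | ∃ u v : List ι, u ≠ [] ∧ v ≠ [] ∧ x = shf K ds u v}

/-- graded-symmetry relations in the `List` (symmetric-word) part of `α × List α` -/
def symRelP {α : Type} (K : Type) [Field K] (dg : α → ℤ) : Set (FM K (α × List α)) :=
  {x | ∃ h : α, ∃ l1 : List α, ∃ u v : α, ∃ l2 : List α,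
    x = Finsupp.single (h, l1 ++ u :: v :: l2) 1
      - zsgn K (dg u * dg v) • Finsupp.single (h, l1 ++ v :: u :: l2) 1}

/-- the graded flip on the free module on `α × α` -/
def tauP {α : Type} (K : Type) [Field K] (dg : α → ℤ) :
    FM K (α × α) →ₗ[K] FM K (α × α) :=
  extL (fun p => zsgn K (dg p.1 * dg p.2) • Finsupp.single (p.2, p.1) 1)

/-- τ₁₂ = τ ⊗ id on triples -/
def tau12 {α : Type} (K : Type) [Field K] (dg : α → ℤ) :
    FM K (α × α × α) →ₗ[K] FM K (α × α × α) :=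
  extL (fun p => zsgn K (dg p.1 * dg p.2.1) • Finsupp.single (p.2.1, p.1, p.2.2) 1)

/-- τ₂₃ = id ⊗ τ on triples -/
def tau23 {α : Type} (K : Type) [Field K] (dg : α → ℤ) :
    FM K (α × α × α) →ₗ[K] FM K (α × α × α) :=
  extL (fun p => zsgn K (dg p.2.1 * dg p.2.2) • Finsupp.single (p.1, p.2.2, p.2.1) 1)

/-- `f ⊗ id` for a map `f` with values in two factors (no Koszul sign) -/
def firstT {α : Type} (f : α → FM K (α × α)) :
    FM K (α × α) →ₗ[K] FM K (α × α × α) :=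
  extL (fun p => Finsupp.mapDomain (fun q => (q.1, q.2, p.2)) (f p.1))

/-- `id ⊗ f` for a map `f` of degree `degf` with values in two factors (Koszul sign) -/
def secondT {α : Type} (dg : α → ℤ) (degf : ℤ) (f : α → FM K (α × α)) :
    FM K (α × α) →ₗ[K] FM K (α × α × α) :=
  extL (fun p => zsgn K (degf * dg p.1) •
    Finsupp.mapDomain (fun q => (p.1, q.1, q.2)) (f p.2))

/-- `f ⊗ id + id ⊗ f` for a coderivation-type map `f` of degree `degf` (Koszul sign) -/
def coderT {α : Type} (dg : α → ℤ) (degf : ℤ) (f : α → FM K α) :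
    FM K (α × α) →ₗ[K] FM K (α × α) :=
  extL (fun p => Finsupp.mapDomain (fun q => (q, p.2)) (f p.1)
      + zsgn K (degf * dg p.1) • Finsupp.mapDomain (fun q => (p.1, q)) (f p.2))

/-- homogeneity of an element of the free module on `α`, w.r.t. a degree on `α` -/
def IsHomog {α : Type} (dg : α → ℤ) (x : FM K α) (n : ℤ) : Prop :=
  ∀ a ∈ x.support, dg a = n


/-! ### coproducts on words -/

/-- the unshuffle coproduct of the cocommutative coassociative cogebra
`S⁺(g[1])` (on word representatives):
`Δ(x₁⋯xₙ) = Σ_{I⊔J=[n], I,J≠∅} ε_x(I,J) x_I ⊗ x_J`. -/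
def sDelta (K : Type) [Field K] (ds : ι → ℤ) (w : List ι) : FM K (List ι × List ι) :=
  ∑ S ∈ (Finset.range w.length).powerset.filter
      (fun S => S ≠ ∅ ∧ S ≠ Finset.range w.length),
    unshSgn K ds w
        (S.sort (· ≤ ·) ++ ((Finset.range w.length \ S).sort (· ≤ ·))) •
      Finsupp.single (subw w S, subw w (Finset.range w.length \ S)) 1

/-- the antisymmetrised deconcatenation cocrochet
`δ(x₁⊗…⊗xₙ) = Σ_j (x₁…x_j) ⊗ (x_{j+1}…xₙ) − ε (x_{j+1}…xₙ) ⊗ (x₁…x_j)`. -/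
def lieDelta (K : Type) [Field K] (ds : ι → ℤ) (w : List ι) :
    FM K (List ι × List ι) :=
  fsum (cuts w) (fun p =>
    Finsupp.single p 1
      - zsgn K (dsum ds p.1 * dsum ds p.2) • Finsupp.single (p.2, p.1) 1)

/-- the cofree Leibniz cogebra coproduct on `T⁺(V[1])`:
`δ(x₁⊗…⊗xₙ) = Σ_k (x₁⊗…⊗x_k) ⊗ μ_{n-k}(x_{k+1}⊗…⊗xₙ)`. -/
def leibDelta (K : Type) [Field K] (ds : ι → ℤ) (w : List ι) :
    FM K (List ι × List ι) :=
  fsum (cuts w) (fun p => Finsupp.mapDomain (fun m => (p.1, m)) (mu K ds p.2))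

/-! ### coderivation-type operators on words -/

/-- `Σ_k ± x₁⊗…⊗q₁(x_k)⊗…⊗xₙ` with Koszul prefix signs `(-1)^{Σ_{i<k} deg xᵢ}` -/
def repl1 (K : Type) [Field K] (ds : ι → ℤ) (q1 : ι → FM K ι) :
    List ι → FM K (List ι)
  | [] => 0
  | a :: l => (q1 a).sum (fun i c => c • Finsupp.single (i :: l) 1)
      + zsgn K (ds a) • Finsupp.mapDomain (a :: ·) (repl1 K ds q1 l)

/-- `Σ_k ± x₁⊗…⊗q₂(x_k,x_{k+1})⊗…⊗xₙ` (collapse of every adjacent pair) with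
Koszul prefix signs -/
def repl2 (K : Type) [Field K] (ds : ι → ℤ) (q2 : ι → ι → FM K ι) :
    List ι → FM K (List ι)
  | [] => 0
  | [_] => 0
  | a :: b :: l => (q2 a b).sum (fun i c => c • Finsupp.single (i :: l) 1)
      + zsgn K (ds a) • Finsupp.mapDomain (a :: ·) (repl2 K ds q2 (b :: l))

/-- collapse the leading pair with `q2h`, and every interior pair with `q2i` -/
def headInt (K : Type) [Field K] (ds : ι → ℤ) (q2h q2i : ι → ι → FM K ι) :
    List ι → FM K (List ι)
  | [] => 0
  | [_] => 0
  | a :: b :: l => (q2h a b).sum (fun i c => c • Finsupp.single (i :: l) 1)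
      + zsgn K (ds a) • Finsupp.mapDomain (a :: ·) (repl2 K ds q2i (b :: l))

/-- `D₂(α,β) = (−1)^{deg α} α∧β` on basis letters -/
def d2of (K : Type) [Field K] (ds : ι → ℤ) (w2 : ι → ι → FM K ι) (a b : ι) : FM K ι :=
  zsgn K (ds a) • w2 a b

/-- `D₂∘μ₂(α,β) = D₂(α,β) − (−1)^{deg α · deg β} D₂(β,α)` on basis letters -/
def d2mu (K : Type) [Field K] (ds : ι → ℤ) (w2 : ι → ι → FM K ι) (a b : ι) : FM K ι :=
  d2of K ds w2 a b - zsgn K (ds a * ds b) • d2of K ds w2 b a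

/-- the codifferential of the Leibniz cogebra `T⁺(𝒢[1])` determined by a product
`∧` (no differential part):
`D(α₁⊗…⊗αₙ) = D₂(α₁,α₂)⊗α₃⊗…⊗αₙ + Σ_k ± α₁⊗…⊗(D₂∘μ₂)(α_k,α_{k+1})⊗…⊗αₙ` -/
def Dpre (K : Type) [Field K] (ds : ι → ℤ) (w2 : ι → ι → FM K ι) :
    List ι → FM K (List ι) :=
  headInt K ds (d2of K ds w2) (d2mu K ds w2)

/-! ### the extended bracket and the extension `R₂` of a pre-Lie product -/

/-- the extension of a degree −1 bracket `b2` to words: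
`[X,Y] = Σ_{shuffles, adjacent pair (x from X, y from Y)} ± …⊗[x,y]⊗…` -/
def brS (K : Type) [Field K] (ds : ι → ℤ) (b2 : ι → ι → FM K ι) :
    List ι → List ι → FM K (List ι)
  | [], _ => 0
  | _, [] => 0
  | a :: u, b :: v =>
      Finsupp.mapDomain (a :: ·) (brS K ds b2 u (b :: v))
      + zsgn K (ds b * dsum ds (a :: u)) •
          Finsupp.mapDomain (b :: ·) (brS K ds b2 (a :: u) v)
      + zsgn K (ds b * dsum ds u) • consV (b2 a b) (shf K ds u v)
  termination_by u v => u.length + v.length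

/-- the bracketed tail terms of `R₂`:
`Σ_k u₁⊗…⊗u_{k-1}⊗[u_k,b]⊗sh(u_{k+1}…, v)` with signs -/
def r2brTail (K : Type) [Field K] (ds : ι → ℤ) (b2 : ι → ι → FM K ι) :
    List ι → ι → List ι → FM K (List ι)
  | [], _, _ => 0
  | x :: u, b, v =>
      zsgn K (ds b * dsum ds u) • consV (b2 x b) (shf K ds u v)
      + Finsupp.mapDomain (x :: ·) (r2brTail K ds b2 u b v)

/-- `[α,β] = α◇β − (−1)^{deg α · deg β} β◇α` on basis letters -/
def brOf (K : Type) [Field K] (ds : ι → ℤ) (dia2 : ι → ι → FM K ι) (a b : ι) : FM K ι :=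
  dia2 a b - zsgn K (ds a * ds b) • dia2 b a

/-- the extension `R₂` of the pre-Lie product `◇` to `T⁺(𝒢[1])`:
`R₂(α₁⊗…⊗αₚ, α_{p+1}⊗…⊗α_{p+q}) = ±(α₁◇α_{p+1})⊗sh(…) + Σ_k ± α₁⊗…⊗[α_k,α_{p+1}]⊗sh(…)` -/
def R2w (K : Type) [Field K] (ds : ι → ℤ) (dia2 : ι → ι → FM K ι) :
    List ι → List ι → FM K (List ι)
  | [], _ => 0
  | _, [] => 0
  | a :: u, b :: v =>
      zsgn K (ds b * dsum ds u) • consV (dia2 a b) (shf K ds u v)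
      + Finsupp.mapDomain (a :: ·) (r2brTail K ds (brOf K ds dia2) u b v)


/-! ### the construction on `H[1] ⊗ S(H[1])`, where `H = T⁺(𝒢[1])` -/

/-- the twice-shifted degree `deg'(X) = deg(X) − 1` of a word `X ∈ H[1]` -/
def dgp (ds : ι → ℤ) (w : List ι) : ℤ := dsum ds w - 1

/-- basis of (word representatives of) `H[1] ⊗ S(H[1])` : a head word and a
list of factor words -/
abbrev BB (ι : Type) : Type := List ι × List (List ι)

/-- the `deg'`-degree of a basis element of `H[1] ⊗ S(H[1])` -/
def degB (ds : ι → ℤ) (b : BB ι) : ℤ := dgp ds b.1 + dsum (dgp ds) b.2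

/-- embed a symmetric product whose first factor is a general element of `H` -/
def symEmbV (K : Type) [Field K] (ds : ι → ℤ) (g : FM K (List ι))
    (L : List (List ι)) : FM K (BB ι) :=
  g.sum fun w c => c • symEmb K (dgp ds) (w :: L)

/-- the coderivation `m` of `H[1] ⊗ S(H[1])` extending the codifferential `D` of `H`:
`m(X₀⊗X₁⋯Xₙ) = D(X₀)⊗X₁⋯Xₙ + (−1)^{x₀'} Σ_j ± X₀⊗D(X_j)·X₁⋯ĵ⋯Xₙ` -/
def mB (K : Type) [Field K] (ds : ι → ℤ) (w2 : ι → ι → FM K ι) (b : BB ι) :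
    FM K (BB ι) :=
  (Dpre K ds w2 b.1).sum (fun w c => c • Finsupp.single (w, b.2) 1)
  + zsgn K (dgp ds b.1) • fsum (focuses b.2) (fun t =>
      zsgn K (dgp ds t.2.1 * dsum (dgp ds) t.1) •
        (Dpre K ds w2 t.2.1).sum
          (fun w c => c • Finsupp.single (b.1, w :: (t.1 ++ t.2.2)) 1))

/-- `R₂'(X,Y) = (−1)^{deg' X} R₂(X,Y)` -/
def R2p (K : Type) [Field K] (ds : ι → ℤ) (dia2 : ι → ι → FM K ι)
    (X Y : List ι) : FM K (List ι) :=
  zsgn K (dgp ds X) • R2w K ds dia2 X Y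

/-- `ℓ₂(X,Y) = R₂'(X,Y) + (−1)^{deg'X · deg'Y} R₂'(Y,X)` -/
def ell2 (K : Type) [Field K] (ds : ι → ℤ) (dia2 : ι → ι → FM K ι)
    (X Y : List ι) : FM K (List ι) :=
  R2p K ds dia2 X Y + zsgn K (dgp ds X * dgp ds Y) • R2p K ds dia2 Y X

/-- the coderivation `R` of `H[1] ⊗ S(H[1])` extending `R₂'`:
`R(X₀⊗X₁⋯Xₙ) = Σ_i ± R₂'(X₀,X_i)⊗X₁⋯î⋯Xₙ + (−1)^{x₀'} Σ_{i<j} ± X₀⊗ℓ₂(X_i,X_j)·X₁⋯îĵ⋯Xₙ` -/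
def RB (K : Type) [Field K] (ds : ι → ℤ) (dia2 : ι → ι → FM K ι) (b : BB ι) :
    FM K (BB ι) :=
  fsum (focuses b.2) (fun t =>
    zsgn K (dgp ds t.2.1 * dsum (dgp ds) t.1) •
      (R2p K ds dia2 b.1 t.2.1).sum
        (fun w c => c • Finsupp.single (w, t.1 ++ t.2.2) 1))
  + zsgn K (dgp ds b.1) • fsum (focuses b.2) (fun t1 =>
      fsum (focuses t1.2.2) (fun t2 =>
        zsgn K (dgp ds t1.2.1 * dsum (dgp ds) t1.1
            + dgp ds t2.2.1 * (dsum (dgp ds) t1.1 + dsum (dgp ds) t2.1)) •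
          (ell2 K ds dia2 t1.2.1 t2.2.1).sum
            (fun w c => c • Finsupp.single (b.1, w :: (t1.1 ++ t2.1 ++ t2.2.2)) 1)))

/-- the Leibniz-type coproduct `κ` on `H[1] ⊗ S(H[1])`:
`κ(X₀⊗X₁⋯Xₙ) = Σ_{U₀⊗V₀=X₀, I⊔J} (−1)^{u₀'} ( ε (U₀⊗X_I) ⊗ μV₀·X_J
+ ε (μV₀⊗X_J) ⊗ U₀·X_I ) + (−1)^{x₀'} X₀⊗κ'(X₁⋯Xₙ)` -/
def kappaB (K : Type) [Field K] (ds : ι → ℤ) (b : BB ι) :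
    FM K (BB ι × BB ι) :=
  fsum (cuts b.1) (fun uv =>
    fsum (splits K (dgp ds) b.2) (fun t =>
      (zsgn K (dgp ds uv.1) * t.2.2 * zsgn K (dgp ds uv.2 * dsum (dgp ds) t.1)) •
        Finsupp.mapDomain (fun e => ((uv.1, t.1), e))
          (symEmbV K ds (mu K ds uv.2) t.2.1)
      + (zsgn K (dgp ds uv.1) * t.2.2 * zsgn K (dgp ds uv.1 * dgp ds uv.2)
            * zsgn K (dgp ds uv.1 * dsum (dgp ds) t.1)) •
          (mu K ds uv.2).sum (fun m c =>
            c • Finsupp.mapDomain (fun e => ((m, t.1), e))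
                  (symEmb K (dgp ds) (uv.1 :: t.2.1)))))
  + zsgn K (dgp ds b.1) • fsum (focuses b.2) (fun tf =>
      fsum (cuts tf.2.1) (fun uv =>
        fsum (splits K (dgp ds) tf.1) (fun tp =>
          fsum (splits K (dgp ds) tf.2.2) (fun tq =>
            (zsgn K (dsum (dgp ds) tf.1) * zsgn K (dgp ds uv.1)
                * tp.2.2 * tq.2.2
                * zsgn K (dsum (dgp ds) tp.2.1 * dsum (dgp ds) tq.1
                    + dgp ds tf.2.1 * (dsum (dgp ds) tp.2.1 + dsum (dgp ds) tq.1))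
                * zsgn K (dsum (dgp ds) tp.2.1 + dsum (dgp ds) tq.1)) •
              (Finsupp.mapDomain (fun e => ((b.1, tp.1 ++ tq.1 ++ [uv.1]), e))
                  (symEmbV K ds (mu K ds uv.2) (tp.2.1 ++ tq.2.1))
               + zsgn K (dgp ds uv.1 * dgp ds uv.2) •
                  (mu K ds uv.2).sum (fun m c =>
                    c • Finsupp.mapDomain (fun e => ((b.1, tp.1 ++ tq.1 ++ [m]), e))
                          (symEmb K (dgp ds) (uv.1 :: (tp.2.1 ++ tq.2.1)))))))))


/-! ### auxiliary lemmas for stmt8 -/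

section Stmt8Aux

variable {α β γ : Type} (ds : ι → ℤ)

@[simp] lemma zsgn_add (m n : ℤ) : zsgn K (m + n) = zsgn K m * zsgn K n := by
  simpa [zsgn] using zpow_add₀ (by simp : (-1 : K) ≠ 0) m n

@[simp] lemma zsgn_mul_self (m : ℤ) : zsgn K m * zsgn K m = 1 := by
  rw [zsgn, ← mul_zpow]; norm_num

@[simp] lemma zsgn_zero : zsgn K 0 = 1 := by simp [zsgn]

@[simp] lemma dsum_nil : dsum ds ([] : List ι) = 0 := rfl

@[simp] lemma dsum_cons (a : ι) (l : List ι) : dsum ds (a :: l) = ds a + dsum ds l := by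
  simp [dsum]

@[simp] lemma dsum_append (l m : List ι) : dsum ds (l ++ m) = dsum ds l + dsum ds m := by
  simp [dsum]

lemma extL_apply (f : α → FM K β) (x : FM K α) :
    extL f x = x.sum fun a c => c • f a := by
  simp [extL, Finsupp.lift_apply]

@[simp] lemma extL_single (f : α → FM K β) (a : α) (c : K) :
    extL f (Finsupp.single a c) = c • f a := by
  simp [extL_apply, Finsupp.sum_single_index]

lemma extL_congr {f g : α → FM K β} {x : FM K α} (h : ∀ a ∈ x.support, f a = g a) :
    extL f x = extL g x := by
  rw [extL_apply, extL_apply]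
  exact Finsupp.sum_congr fun a ha => by rw [h a ha]

lemma extL_mapDomain (f : β → FM K γ) (g : α → β) (x : FM K α) :
    extL f (Finsupp.mapDomain g x) = extL (fun a => f (g a)) x := by
  induction x using Finsupp.induction with
  | zero => simp
  | single_add a c x _ _ ih =>
    rw [Finsupp.mapDomain_add, map_add, map_add, Finsupp.mapDomain_single,
      extL_single, extL_single, ih]

lemma extL_single_one (g : α → β) (x : FM K α) :
    extL (fun a => Finsupp.single (g a) (1 : K)) x = Finsupp.mapDomain g x := by
  induction x using Finsupp.induction with
  | zero => simp
  | single_add a c x _ _ ih =>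
    rw [Finsupp.mapDomain_add, map_add, extL_single, ih, Finsupp.mapDomain_single,
      Finsupp.smul_single, smul_eq_mul, mul_one]

lemma extL_mapDomain_comp (f : α → FM K β) (g : β → γ) (x : FM K α) :
    extL (fun a => Finsupp.mapDomain g (f a)) x = Finsupp.mapDomain g (extL f x) := by
  induction x using Finsupp.induction with
  | zero => simp
  | single_add a c x _ _ ih =>
    rw [map_add, map_add, Finsupp.mapDomain_add, extL_single, extL_single, ih,
      Finsupp.mapDomain_smul]

lemma extL_smul_fun (c : K) (f : α → FM K β) (x : FM K α) :
    extL (fun a => c • f a) x = c • extL f x := by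
  induction x using Finsupp.induction with
  | zero => simp
  | single_add a k x _ _ ih =>
    rw [map_add, map_add, extL_single, extL_single, ih, smul_add, smul_comm]

lemma extL_extL (f : β → FM K γ) (g : α → FM K β) (x : FM K α) :
    extL (fun a => extL f (g a)) x = extL f (extL g x) := by
  induction x using Finsupp.induction with
  | zero => simp
  | single_add a c x _ _ ih =>
    rw [map_add, extL_single, map_add, extL_single, ih, map_add, map_smul]

lemma extL_sub_fun (f g : α → FM K β) (x : FM K α) :
    extL (fun a => f a - g a) x = extL f x - extL g x := by
  induction x using Finsupp.induction with
  | zero => simp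
  | single_add a c x _ _ ih =>
    rw [map_add, map_add, map_add, extL_single, extL_single, extL_single, ih,
      smul_sub]; abel

end Stmt8Aux

section Stmt8Shf

variable (ds : ι → ℤ)

lemma shf_nil_left (v : List ι) : shf K ds [] v = Finsupp.single v 1 := by
  simp [shf]

lemma shf_nil_right (u : List ι) : shf K ds u [] = Finsupp.single u 1 := by
  cases u <;> simp [shf]

lemma shf_cons (a b : ι) (u v : List ι) : shf K ds (a :: u) (b :: v) =
    Finsupp.mapDomain (a :: ·) (shf K ds u (b :: v))
    + zsgn K (ds b * dsum ds (a :: u)) •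
        Finsupp.mapDomain (b :: ·) (shf K ds (a :: u) v) := by
  rw [shf]

lemma mem_support_single' {a w : α} {c : K} (hw : w ∈ (Finsupp.single a c).support) :
    w = a := by
  have := Finsupp.support_single_subset hw
  simpa using this

lemma shf_support_perm : ∀ n u v, u.length + v.length ≤ n →
    ∀ w ∈ (shf K ds u v).support, w.Perm (u ++ v) := by
  intro n
  induction n with
  | zero =>
    intro u v h w hw
    have hu : u = [] := List.eq_nil_of_length_eq_zero (by omega)
    have hv : v = [] := List.eq_nil_of_length_eq_zero (by omega)
    subst hu; subst hv
    rw [shf_nil_left] at hw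
    simp [mem_support_single' hw]
  | succ n ih =>
    intro u v h w hw
    classical
    match u, v with
    | [], v =>
      rw [shf_nil_left] at hw
      simp [mem_support_single' hw]
    | u, [] =>
      rw [shf_nil_right] at hw
      simp [mem_support_single' hw]
    | a :: u, b :: v =>
      rw [shf_cons] at hw
      rcases Finset.mem_union.1 (Finsupp.support_add hw) with hw | hw
      · obtain ⟨w', hw', rfl⟩ := Finset.mem_image.1 (Finsupp.mapDomain_support hw)
        have := ih u (b :: v) (by simp at h ⊢; omega) w' hw'
        simpa using this.cons a
      · have hw2 := Finsupp.support_smul hw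
        obtain ⟨w', hw', rfl⟩ := Finset.mem_image.1 (Finsupp.mapDomain_support hw2)
        have h1 := ih (a :: u) v (by simp at h ⊢; omega) w' hw'
        refine ((h1.cons b).trans ?_)
        have h2 : [b] ++ (a :: u) ++ v = b :: (a :: u ++ v) := by simp
        have h3 : (a :: u) ++ [b] ++ v = a :: u ++ b :: v := by simp
        rw [← h2, ← h3]
        exact (List.perm_append_comm).append_right v

lemma dsum_of_mem_shf {u v w : List ι} (hw : w ∈ (shf K ds u v).support) :
    dsum ds w = dsum ds u + dsum ds v := by
  have := shf_support_perm ds (u.length + v.length) u v le_rfl w hw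
  have h2 : dsum ds w = dsum ds (u ++ v) := by
    unfold dsum; exact List.Perm.sum_eq (this.map ds)
  simpa using h2

lemma length_of_mem_shf {u v w : List ι} (hw : w ∈ (shf K ds u v).support) :
    w.length = u.length + v.length := by
  have := shf_support_perm ds (u.length + v.length) u v le_rfl w hw
  simpa using this.length_eq

lemma shf_snoc (x y : ι) : ∀ n (u v : List ι), u.length + v.length ≤ n →
    shf K ds (u ++ [x]) (v ++ [y]) =
      zsgn K (ds x * dsum ds (v ++ [y])) •
          Finsupp.mapDomain (· ++ [x]) (shf K ds u (v ++ [y]))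
      + Finsupp.mapDomain (· ++ [y]) (shf K ds (u ++ [x]) v) := by
  intro n
  induction n with
  | zero =>
    intro u v h
    have hu : u = [] := List.eq_nil_of_length_eq_zero (by omega)
    have hv : v = [] := List.eq_nil_of_length_eq_zero (by omega)
    subst hu; subst hv
    simp only [List.nil_append, shf_cons, shf_nil_left, shf_nil_right,
      Finsupp.mapDomain_single, dsum_cons, dsum_nil]
    simp [List.singleton_append, mul_comm, add_comm]
  | succ n ih =>
    intro u v h
    rcases u with _ | ⟨a, u⟩ <;> rcases v with _ | ⟨b, v⟩
    · simp only [List.nil_append, shf_cons, shf_nil_left, shf_nil_right,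
        Finsupp.mapDomain_single, dsum_cons, dsum_nil]
      simp [List.singleton_append, mul_comm, add_comm]
    · -- u = [], v = b :: v
      have IH := ih [] v (by simp at h ⊢; omega)
      simp only [List.nil_append] at IH
      simp only [List.nil_append, List.cons_append]
      rw [shf_cons, IH, shf_nil_left]
      conv_rhs => rw [shf_cons, shf_nil_left]
      simp only [Finsupp.mapDomain_add, Finsupp.mapDomain_smul, smul_add,
        smul_smul, ← Finsupp.mapDomain_comp, Function.comp_def, List.cons_append,
        Finsupp.mapDomain_single, shf_nil_left, shf_nil_right, dsum_cons,
        dsum_append, dsum_nil, mul_add, add_mul, add_zero, zero_add, zsgn_add]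
      simp only [mul_comm]
      module
    · -- u = a :: u, v = []
      have IH := ih u [] (by simp at h ⊢; omega)
      simp only [List.nil_append] at IH
      simp only [List.nil_append, List.cons_append]
      rw [shf_cons, IH, shf_nil_right]
      conv_rhs => rw [shf_cons, shf_nil_right]
      simp only [Finsupp.mapDomain_add, Finsupp.mapDomain_smul, smul_add,
        smul_smul, ← Finsupp.mapDomain_comp, Function.comp_def, List.cons_append,
        Finsupp.mapDomain_single, shf_nil_left, shf_nil_right, dsum_cons,
        dsum_append, dsum_nil, mul_add, add_mul, add_zero, zero_add, zsgn_add]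
      simp only [mul_comm]
      module
    · -- cons cons
      have IH1 := ih u (b :: v) (by simp at h ⊢; omega)
      have IH2 := ih (a :: u) v (by simp at h ⊢; omega)
      simp only [List.cons_append] at IH1 IH2
      simp only [List.cons_append]
      rw [shf_cons, IH1, IH2]
      conv_rhs => rw [shf_cons, shf_cons]
      simp only [Finsupp.mapDomain_add, Finsupp.mapDomain_smul, smul_add,
        smul_smul, ← Finsupp.mapDomain_comp, Function.comp_def, List.cons_append,
        Finsupp.mapDomain_single, shf_nil_left, shf_nil_right, dsum_cons,
        dsum_append, dsum_nil, mul_add, add_mul, add_zero, zero_add, zsgn_add]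
      simp only [mul_comm]
      module

end Stmt8Shf

section Stmt8Mu

variable (ds : ι → ℤ)

/-- `μ(dropLast w) ⊗ (last w)` -/
def nuL (K : Type) [Field K] (ds : ι → ℤ) (w : List ι) : FM K (List ι) :=
  Finsupp.mapDomain (· ++ w.drop (w.length - 1)) (mu K ds w.dropLast)

/-- Koszul-signed rotation of a word (head moved to the end) -/
def tauL (K : Type) [Field K] (ds : ι → ℤ) : List ι → FM K (List ι)
  | [] => 0
  | a :: l => zsgn K (ds a * dsum ds l) • Finsupp.single (l ++ [a]) 1

lemma nuL_snoc (w : List ι) (z : ι) :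
    nuL K ds (w ++ [z]) = Finsupp.mapDomain (· ++ [z]) (mu K ds w) := by
  unfold nuL
  rw [List.dropLast_concat]
  have h1 : (w ++ [z]).length - 1 = w.length := by simp
  rw [h1, List.drop_left]

lemma nuL_cons₂ (a b : ι) (l : List ι) :
    nuL K ds (a :: b :: l) =
      Finsupp.mapDomain (fun w => w ++ [(b :: l).getLast (List.cons_ne_nil _ _)])
        (mu K ds ((a :: b :: l).dropLast)) := by
  have h0 : a :: b :: l =
      (a :: b :: l).dropLast ++ [(a :: b :: l).getLast (List.cons_ne_nil _ _)] :=
    (List.dropLast_append_getLast _).symm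
  conv_lhs => rw [h0]
  rw [nuL_snoc]
  have h1 : (a :: b :: l).getLast (List.cons_ne_nil _ _)
      = (b :: l).getLast (List.cons_ne_nil _ _) := List.getLast_cons _
  rw [h1]

lemma mu_eq_nuL (a b : ι) (l : List ι) :
    mu K ds (a :: b :: l) =
      nuL K ds (a :: b :: l) - extL (nuL K ds) (tauL K ds (a :: b :: l)) := by
  rw [mu, nuL_cons₂]
  congr 1
  show _ = extL (nuL K ds) (zsgn K (ds a * dsum ds (b :: l)) •
    Finsupp.single ((b :: l) ++ [a]) 1)
  rw [map_smul, extL_single, one_smul, nuL_snoc]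

lemma extL_mu_shf_zero : ∀ n (u v : List ι), u ≠ [] → v ≠ [] →
    u.length + v.length ≤ n → extL (mu K ds) (shf K ds u v) = 0 := by
  intro n
  induction n with
  | zero =>
    intro u v hu hv h
    have := List.length_pos_iff.mpr hu
    have := List.length_pos_iff.mpr hv
    omega
  | succ n ih =>
    intro u v hu hv h
    obtain ⟨a, u₂, hu2⟩ := List.exists_cons_of_ne_nil hu
    obtain ⟨b, v₂, hv2⟩ := List.exists_cons_of_ne_nil hv
    rcases (u.eq_nil_or_concat).resolve_left hu with ⟨u'', x, hu1⟩
    rcases (v.eq_nil_or_concat).resolve_left hv with ⟨v'', y, hv1⟩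
    rw [List.concat_eq_append] at hu1
    rw [List.concat_eq_append] at hv1
    -- step A : factor μ = ν ∘ (1 − τ) on words of length ≥ 2
    have hA : extL (mu K ds) (shf K ds u v)
        = extL (nuL K ds) (shf K ds u v)
          - extL (nuL K ds) (extL (tauL K ds) (shf K ds u v)) := by
      rw [← extL_extL, ← extL_sub_fun]
      refine extL_congr fun w hw => ?_
      have hlen := length_of_mem_shf ds hw
      match w with
      | [] => rw [hu2] at hlen; simp at hlen; omega
      | [c] => rw [hu2, hv2] at hlen; simp at hlen; omega
      | c :: d :: t => exact mu_eq_nuL ds c d t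
    -- step B : ν on a word with a letter appended
    have hB : ∀ (z : ι) (A B : List ι),
        extL (nuL K ds) (Finsupp.mapDomain (· ++ [z]) (shf K ds A B))
          = Finsupp.mapDomain (· ++ [z]) (extL (mu K ds) (shf K ds A B)) := by
      intro z A B
      rw [extL_mapDomain]
      have : (fun w => nuL K ds (w ++ [z]))
          = fun w => Finsupp.mapDomain (· ++ [z]) (mu K ds w) :=
        funext fun w => nuL_snoc ds w z
      rw [this, extL_mapDomain_comp]
    -- the snoc decomposition of the shuffle
    have hsh : shf K ds u v =
        zsgn K (ds x * dsum ds v) •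
            Finsupp.mapDomain (· ++ [x]) (shf K ds u'' v)
          + Finsupp.mapDomain (· ++ [y]) (shf K ds u v'') := by
      conv_lhs => rw [hu1, hv1]
      rw [shf_snoc ds x y _ u'' v'' le_rfl, ← hu1, ← hv1]
    -- step C : τ of the shuffle, via the cons decomposition
    have hC : extL (tauL K ds) (shf K ds u v) =
        zsgn K (ds a * (dsum ds u₂ + dsum ds v)) •
            Finsupp.mapDomain (· ++ [a]) (shf K ds u₂ v)
          + (zsgn K (ds b * dsum ds u)
              * zsgn K (ds b * (dsum ds u + dsum ds v₂))) •
            Finsupp.mapDomain (· ++ [b]) (shf K ds u v₂) := by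
      conv_lhs => rw [hu2, hv2, shf_cons]
      rw [map_add, map_smul, extL_mapDomain, extL_mapDomain]
      have e1 : extL (fun w => tauL K ds (a :: w)) (shf K ds u₂ (b :: v₂))
          = zsgn K (ds a * (dsum ds u₂ + dsum ds (b :: v₂))) •
              Finsupp.mapDomain (· ++ [a]) (shf K ds u₂ (b :: v₂)) := by
        rw [extL_congr (g := fun w => zsgn K (ds a * (dsum ds u₂ + dsum ds (b :: v₂)))
            • Finsupp.single (w ++ [a]) 1)
          (fun w hw => by simp only [tauL]; rw [dsum_of_mem_shf ds hw]),
          extL_smul_fun, extL_single_one]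
      have e2 : extL (fun w => tauL K ds (b :: w)) (shf K ds (a :: u₂) v₂)
          = zsgn K (ds b * (dsum ds (a :: u₂) + dsum ds v₂)) •
              Finsupp.mapDomain (· ++ [b]) (shf K ds (a :: u₂) v₂) := by
        rw [extL_congr (g := fun w => zsgn K (ds b * (dsum ds (a :: u₂) + dsum ds v₂))
            • Finsupp.single (w ++ [b]) 1)
          (fun w hw => by simp only [tauL]; rw [dsum_of_mem_shf ds hw]),
          extL_smul_fun, extL_single_one]
      rw [e1, e2, ← hu2, ← hv2, smul_smul]
    -- assemble
    rw [hA, hC, map_add, map_smul, map_smul, hB, hB, hsh, map_add, map_smul,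
      hB, hB]
    have key1 : zsgn K (ds x * dsum ds v) •
          Finsupp.mapDomain (· ++ [x]) (extL (mu K ds) (shf K ds u'' v))
        = zsgn K (ds a * (dsum ds u₂ + dsum ds v)) •
          Finsupp.mapDomain (· ++ [a]) (extL (mu K ds) (shf K ds u₂ v)) := by
      by_cases hcu : u'' = []
      · subst hcu
        have hax : a :: u₂ = [x] := by rw [← hu2, hu1]; simp
        have hax1 : a = x := by injection hax
        have hax2 : u₂ = [] := by injection hax
        subst hax1; subst hax2
        simp
      · have hz1 : extL (mu K ds) (shf K ds u'' v) = 0 := by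
          refine ih u'' v hcu hv ?_
          have : u.length = u''.length + 1 := by rw [hu1]; simp
          omega
        have hcu2 : u₂ ≠ [] := by
          intro hc
          apply hcu
          have : u.length = 1 := by rw [hu2, hc]; rfl
          have h2 : u.length = u''.length + 1 := by rw [hu1]; simp
          exact List.eq_nil_of_length_eq_zero (by omega)
        have hz2 : extL (mu K ds) (shf K ds u₂ v) = 0 := by
          refine ih u₂ v hcu2 hv ?_
          have : u.length = u₂.length + 1 := by rw [hu2]; rfl
          omega
        rw [hz1, hz2]
        simp
    have key2 : Finsupp.mapDomain (· ++ [y]) (extL (mu K ds) (shf K ds u v''))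
        = (zsgn K (ds b * dsum ds u) * zsgn K (ds b * (dsum ds u + dsum ds v₂))) •
          Finsupp.mapDomain (· ++ [b]) (extL (mu K ds) (shf K ds u v₂)) := by
      by_cases hcv : v'' = []
      · subst hcv
        have hby : b :: v₂ = [y] := by rw [← hv2, hv1]; simp
        have hby1 : b = y := by injection hby
        have hby2 : v₂ = [] := by injection hby
        subst hby1; subst hby2
        rw [show zsgn K (ds b * dsum ds u) *
            zsgn K (ds b * (dsum ds u + dsum ds [])) = 1 by
          simp [zsgn_mul_self], one_smul]
      · have hz1 : extL (mu K ds) (shf K ds u v'') = 0 := by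
          refine ih u v'' hu hcv ?_
          have : v.length = v''.length + 1 := by rw [hv1]; simp
          omega
        have hcv2 : v₂ ≠ [] := by
          intro hc
          apply hcv
          have : v.length = 1 := by rw [hv2, hc]; rfl
          have h2 : v.length = v''.length + 1 := by rw [hv1]; simp
          exact List.eq_nil_of_length_eq_zero (by omega)
        have hz2 : extL (mu K ds) (shf K ds u v₂) = 0 := by
          refine ih u v₂ hu hcv2 ?_
          have : v.length = v₂.length + 1 := by rw [hv2]; rfl
          omega
        rw [hz1, hz2]
        simp
    rw [key1, key2]
    abel

end Stmt8Mu

/-- For all `p, q ≥ 1`, the composition `μ_{p+q} ∘ sh_{p,q}`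
vanishes: applying the (linear extension of the) iterated signed
antisymmetrisation `μ` to any Koszul-signed shuffle product of two nonempty
words of lengths `p` and `q` gives `0`. -/
theorem stmt8 (K ι : Type) [Field K] (d : ι → ℤ) :
    -- `ds` is the shifted degree `deg(x) = |x| − 1` on `V[1]`
    ∀ ds : ι → ℤ, ds = (fun i => d i - 1) →
    ∀ (p q : ℕ), 1 ≤ p → 1 ≤ q →
    ∀ (u v : List ι), u.length = p → v.length = q →
      extL (mu K ds) (shf K ds u v) = 0 := by
  intro ds _ p q hp hq u v hu hv
  refine extL_mu_shf_zero ds (u.length + v.length) u v ?_ ?_ le_rfl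
  · intro hc; rw [hc] at hu; simp at hu; omega
  · intro hc; rw [hc] at hv; simp at hv; omega

end PG
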